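/- If ⊢ is a regular and compact consequence relation on a sentential language that has a sound and complete intersective mixed semantics, then ⊢ has a truth-adequate mixed semantics over the four-element set of truth values {1, #_p, #_c, 0}, with the single pair D_p = {1, #_p} and D_c = {1, #_c}: i.e. a sound and complete mixed semantics in which every connective is interpreted by a truth-function. -/

import Mathlib

universe u v w x

/-- Mixed truth-relation. -/
def Mixed {V : Type*} (Dp Dc : Set V) (γ δ : Set V) : Prop :=
  γ ⊆ Dp → (δ ∩ Dc).Nonempty

def Monotonic {L : Type*} (Cons : Set L → Set L → Prop) : Prop :=
  ∀ ⦃Γ₁ Γ₂ Δ₁ Δ₂ : Set L⦄, Γ₁ ⊆ Γ₂ → Δ₁ ⊆ Δ₂ → Cons Γ₁ Δ₁ → Cons Γ₂ Δ₂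

def ReflRel {L : Type*} (Cons : Set L → Set L → Prop) : Prop :=
  ∀ F : L, Cons {F} {F}

def TransRel {L : Type*} (Cons : Set L → Set L → Prop) : Prop :=
  ∀ Γ Δ : Set L, ¬ Cons Γ Δ →
    ∃ Γ' Δ' : Set L, Γ ⊆ Γ' ∧ Δ ⊆ Δ' ∧ ¬ Cons Γ' Δ' ∧ Γ' ∪ Δ' = Set.univ

def LRPermeable {L : Type*} (Cons : Set L → Set L → Prop) : Prop :=
  ∀ Γ Δ S : Set L, Cons (Γ ∪ S) Δ → Cons Γ (S ∪ Δ)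

def RLPermeable {L : Type*} (Cons : Set L → Set L → Prop) : Prop :=
  ∀ Γ Δ S : Set L, Cons Γ (S ∪ Δ) → Cons (Γ ∪ S) Δ

def Permeable {L : Type*} (Cons : Set L → Set L → Prop) : Prop :=
  LRPermeable Cons ∨ RLPermeable Cons

def CompactRel {L : Type*} (Cons : Set L → Set L → Prop) : Prop :=
  ∀ Γ Δ : Set L, Cons Γ Δ →
    ∃ Γ' Δ' : Set L, Γ' ⊆ Γ ∧ Δ' ⊆ Δ ∧ Γ'.Finite ∧ Δ'.Finite ∧ Cons Γ' Δ'

/-- Sound and complete intersective mixed semantics. -/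
def IsIMS {L V W Λ : Type*} (Cons : Set L → Set L → Prop)
    (interp : L → W → V) (Dp Dc : Λ → Set V) : Prop :=
  ∀ Γ Δ : Set L, Cons Γ Δ ↔
    ∀ (w : W) (l : Λ), Mixed (Dp l) (Dc l)
      ((fun F => interp F w) '' Γ) ((fun F => interp F w) '' Δ)

/-- Sound and complete mixed semantics (single pair). -/
def IsMixedSem {L V W : Type*} (Cons : Set L → Set L → Prop)
    (interp : L → W → V) (Dp Dc : Set V) : Prop :=
  ∀ Γ Δ : Set L, Cons Γ Δ ↔
    ∀ w : W, Mixed Dp Dc ((fun F => interp F w) '' Γ) ((fun F => interp F w) '' Δ)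

/-- Formulae of a sentential language. -/
inductive Formula (A : Type u) (C : Type u) (ar : C → ℕ) : Type u
  | atom : A → Formula A C ar
  | conn : (c : C) → (Fin (ar c) → Formula A C ar) → Formula A C ar

/-- Substitution induced by a map from atoms to formulae. -/
def Formula.subst {A C : Type u} {ar : C → ℕ} (σ : A → Formula A C ar) :
    Formula A C ar → Formula A C ar
  | .atom a => σ a
  | .conn c Fs => .conn c (fun i => (Fs i).subst σ)

def SubstInvariant {A C : Type u} {ar : C → ℕ}
    (Cons : Set (Formula A C ar) → Set (Formula A C ar) → Prop) : Prop :=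
  ∀ (σ : A → Formula A C ar) (Γ Δ : Set (Formula A C ar)),
    Cons Γ Δ → Cons (Formula.subst σ '' Γ) (Formula.subst σ '' Δ)

/-- Evaluation of formulae from truth-functions and a valuation. -/
def evalF {A C : Type u} {ar : C → ℕ} {V : Type v}
    (tf : (c : C) → (Fin (ar c) → V) → V) (v : A → V) : Formula A C ar → V
  | .atom a => v a
  | .conn c Fs => tf c (fun i => evalF tf v (Fs i))

/-- Truth-functionality of an interpretation w.r.t. truth-functions. -/
def Compositional {A C : Type u} {ar : C → ℕ} {V : Type v} {W : Type w}
    (interp : Formula A C ar → W → V)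
    (tf : (c : C) → (Fin (ar c) → V) → V) : Prop :=
  ∀ (c : C) (Fs : Fin (ar c) → Formula A C ar) (w : W),
    interp (Formula.conn c Fs) w = tf c (fun i => interp (Fs i) w)

/-- Regular connectives. -/
def RegularRel {A C : Type u} {ar : C → ℕ}
    (Cons : Set (Formula A C ar) → Set (Formula A C ar) → Prop) : Prop :=
  ∀ c : C, ∃ Bp Bc : Set (Set (Fin (ar c)) × Set (Fin (ar c))),
    ∀ (Γ Δ : Set (Formula A C ar)) (Fs : Fin (ar c) → Formula A C ar),
      (Cons (Γ ∪ {Formula.conn c Fs}) Δ ↔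
        ∀ B ∈ Bp, Cons (Γ ∪ Fs '' B.1) (Fs '' B.2 ∪ Δ)) ∧
      (Cons Γ ({Formula.conn c Fs} ∪ Δ) ↔
        ∀ B ∈ Bc, Cons (Γ ∪ Fs '' B.1) (Fs '' B.2 ∪ Δ))


open Classical in
/-- Encode a pair of propositions as a four-valued truth value. -/
noncomputable def code4 (a b : Prop) : Fin 4 :=
  if a then (if b then 2 else 1) else (if b then 0 else 3)

lemma code4_p {a b : Prop} : code4 a b ∈ ({1, 2} : Set (Fin 4)) ↔ a := by
  by_cases ha : a <;> by_cases hb : b <;>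
    simp [code4, ha, hb, Set.mem_insert_iff]

lemma code4_d {a b : Prop} : code4 a b ∈ ({0, 2} : Set (Fin 4)) ↔ b := by
  by_cases ha : a <;> by_cases hb : b <;>
    simp [code4, ha, hb, Set.mem_insert_iff]

lemma code4_c {a b : Prop} : code4 a b ∈ ({1, 3} : Set (Fin 4)) ↔ ¬ b := by
  by_cases ha : a <;> by_cases hb : b <;>
    simp [code4, ha, hb, Set.mem_insert_iff]

lemma code4_congr {a a' b b' : Prop} (h1 : a ↔ a') (h2 : b ↔ b') :
    code4 a b = code4 a' b' := by
  rw [show a = a' from propext h1, show b = b' from propext h2]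

/-- Maximal counterexample pairs. -/
def MaxPair {L : Type*} (Cons : Set L → Set L → Prop) (p : Set L × Set L) : Prop :=
  ¬ Cons p.1 p.2 ∧ (∀ F, F ∉ p.1 → Cons (insert F p.1) p.2) ∧
    (∀ F, F ∉ p.2 → Cons p.1 (insert F p.2))

lemma chain_union_finite {α : Type*} {c : Set (Set α)} (hc : IsChain (· ⊆ ·) c)
    (hne : c.Nonempty) {s : Set α} (hs : s.Finite) :
    s ⊆ ⋃₀ c → ∃ q ∈ c, s ⊆ q := by
  refine Set.Finite.induction_on (motive := fun s _ => s ⊆ ⋃₀ c → ∃ q ∈ c, s ⊆ q) s hs (fun _ => ?_) ?_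
  · obtain ⟨q, hq⟩ := hne
    exact ⟨q, hq, Set.empty_subset q⟩
  · rintro a s - - ih hsub
    obtain ⟨q, hqc, hq⟩ := ih (fun x hx => hsub (Set.mem_insert_of_mem a hx))
    obtain ⟨q', hq'c, ha⟩ := hsub (Set.mem_insert a s)
    rcases eq_or_ne q q' with rfl | hne'
    · exact ⟨q, hqc, Set.insert_subset ha hq⟩
    rcases hc hqc hq'c hne' with h | h
    · exact ⟨q', hq'c, Set.insert_subset ha (hq.trans h)⟩
    · exact ⟨q, hqc, Set.insert_subset (h ha) hq⟩

/-- a regular and compact consequence relation with a sound and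
complete intersective mixed semantics has a truth-adequate mixed semantics over
the four-element set of truth values `{1, #_p, #_c, 0}` (encoded in `Fin 4` as
`1`, `2`, `3`, `0` respectively), with `D_p = {1, #_p}` and `D_c = {1, #_c}`. -/
theorem statement_16 {A C : Type u} (ar : C → ℕ)
    (Cons : Set (Formula A C ar) → Set (Formula A C ar) → Prop)
    (hreg : RegularRel Cons) (hcomp : CompactRel Cons)
    (hsem : ∃ (V W Λ : Type u) (interp : Formula A C ar → W → V)
      (Dp Dc : Λ → Set V), IsIMS Cons interp Dp Dc) :
    ∃ (W : Type u) (interp : Formula A C ar → W → Fin 4)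
      (tf : (c : C) → (Fin (ar c) → Fin 4) → Fin 4),
      IsMixedSem Cons interp ({1, 2} : Set (Fin 4)) ({1, 3} : Set (Fin 4)) ∧
      Compositional interp tf := by
  classical
  obtain ⟨V, W0, Lam, it0, Dp0, Dc0, hIMS⟩ := hsem
  -- Monotonicity, derived from the intersective mixed semantics.
  have mono : ∀ {Γ₁ Γ₂ Δ₁ Δ₂ : Set (Formula A C ar)}, Γ₁ ⊆ Γ₂ → Δ₁ ⊆ Δ₂ →
      Cons Γ₁ Δ₁ → Cons Γ₂ Δ₂ := by
    intro Γ₁ Γ₂ Δ₁ Δ₂ h1 h2 hc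
    rw [hIMS] at hc ⊢
    intro w l hsub
    obtain ⟨x, hx1, hx2⟩ := hc w l ((Set.image_mono h1).trans hsub)
    exact ⟨x, Set.image_mono h2 hx1, hx2⟩
  -- Zorn: every non-consequence extends to a maximal one.
  have zorn : ∀ Γ Δ : Set (Formula A C ar), ¬ Cons Γ Δ →
      ∃ p : Set (Formula A C ar) × Set (Formula A C ar),
        MaxPair Cons p ∧ Γ ⊆ p.1 ∧ Δ ⊆ p.2 := by
    intro Γ Δ h
    have hzc : ∀ c ⊆ {p : Set (Formula A C ar) × Set (Formula A C ar) | ¬ Cons p.1 p.2},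
        IsChain (· ≤ ·) c → ∀ y ∈ c,
          ∃ ub ∈ {p : Set (Formula A C ar) × Set (Formula A C ar) | ¬ Cons p.1 p.2},
            ∀ z ∈ c, z ≤ ub := by
      intro c hcs hchain y hy
      refine ⟨(⋃ p ∈ c, p.1, ⋃ p ∈ c, p.2), ?_, ?_⟩
      · intro hcons
        obtain ⟨Γ', Δ', hΓ', hΔ', hfin1, hfin2, hc'⟩ := hcomp _ _ hcons
        have hchain1 : IsChain (· ⊆ ·) (Prod.fst '' c) := by
          rintro _ ⟨p, hp, rfl⟩ _ ⟨q, hq, rfl⟩ hne'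
          rcases hchain hp hq (fun h => hne' (by rw [h])) with h | h
          · exact Or.inl h.1
          · exact Or.inr h.1
        have hchain2 : IsChain (· ⊆ ·) (Prod.snd '' c) := by
          rintro _ ⟨p, hp, rfl⟩ _ ⟨q, hq, rfl⟩ hne'
          rcases hchain hp hq (fun h => hne' (by rw [h])) with h | h
          · exact Or.inl h.2
          · exact Or.inr h.2
        obtain ⟨q1, hq1c, hq1⟩ := chain_union_finite hchain1 ⟨y.1, y, hy, rfl⟩ hfin1
          (by rwa [Set.sUnion_image])
        obtain ⟨q2, hq2c, hq2⟩ := chain_union_finite hchain2 ⟨y.2, y, hy, rfl⟩ hfin2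
          (by rwa [Set.sUnion_image])
        obtain ⟨p1, hp1, rfl⟩ := hq1c
        obtain ⟨p2, hp2, rfl⟩ := hq2c
        rcases eq_or_ne p1 p2 with rfl | hne'
        · exact hcs hp1 (mono hq1 hq2 hc')
        rcases hchain hp1 hp2 hne' with h | h
        · exact hcs hp2 (mono (hq1.trans h.1) hq2 hc')
        · exact hcs hp1 (mono hq1 (hq2.trans h.2) hc')
      · intro z hz
        exact ⟨Set.subset_biUnion_of_mem hz, Set.subset_biUnion_of_mem hz⟩
    obtain ⟨m, hxm, hm⟩ := zorn_le_nonempty₀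
      {p : Set (Formula A C ar) × Set (Formula A C ar) | ¬ Cons p.1 p.2} hzc (Γ, Δ) h
    refine ⟨m, ⟨hm.1, ?_, ?_⟩, hxm.1, hxm.2⟩
    · intro F hF
      by_contra hcon
      have hle : m ≤ (insert F m.1, m.2) := ⟨Set.subset_insert F m.1, le_refl _⟩
      exact hF ((hm.2 hcon hle).1 (Set.mem_insert F m.1))
    · intro F hF
      by_contra hcon
      have hle : m ≤ (m.1, insert F m.2) := ⟨le_refl _, Set.subset_insert F m.2⟩
      exact hF ((hm.2 hcon hle).2 (Set.mem_insert F m.2))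
  choose Bp Bc hB using hreg
  refine ⟨{p : Set (Formula A C ar) × Set (Formula A C ar) // MaxPair Cons p},
    fun F w => code4 (F ∈ w.1.1) (F ∈ w.1.2),
    fun c v => code4
      (∃ B ∈ Bp c, (∀ i ∈ B.1, v i ∈ ({1, 2} : Set (Fin 4))) ∧
        (∀ i ∈ B.2, v i ∈ ({0, 2} : Set (Fin 4))))
      (∃ B ∈ Bc c, (∀ i ∈ B.1, v i ∈ ({1, 2} : Set (Fin 4))) ∧
        (∀ i ∈ B.2, v i ∈ ({0, 2} : Set (Fin 4)))),
    ?_, ?_⟩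
  · -- sound and complete mixed semantics
    intro Γ Δ
    constructor
    · intro hcons w hsub
      by_contra hne
      have hΓ : Γ ⊆ w.1.1 := fun F hF => code4_p.mp (hsub ⟨F, hF, rfl⟩)
      have hΔ : Δ ⊆ w.1.2 := by
        intro F hF
        by_contra hF2
        exact hne ⟨code4 (F ∈ w.1.1) (F ∈ w.1.2), ⟨F, hF, rfl⟩, code4_c.mpr hF2⟩
      exact w.2.1 (mono hΓ hΔ hcons)
    · intro h
      by_contra hcons
      obtain ⟨p, hp, hΓ, hΔ⟩ := zorn Γ Δ hcons
      have hsub : (fun F => code4 (F ∈ p.1) (F ∈ p.2)) '' Γ ⊆ ({1, 2} : Set (Fin 4)) := by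
        rintro _ ⟨F, hF, rfl⟩
        exact code4_p.mpr (hΓ hF)
      obtain ⟨x, ⟨F, hF, rfl⟩, hx⟩ := h ⟨p, hp⟩ hsub
      exact code4_c.mp hx (hΔ hF)
  · -- compositionality
    have memΓ : ∀ (w : {p : Set (Formula A C ar) × Set (Formula A C ar) // MaxPair Cons p})
        (F : Formula A C ar), F ∈ w.1.1 ↔ ¬ Cons (w.1.1 ∪ {F}) w.1.2 := by
      intro w F
      constructor
      · intro h hcons
        exact w.2.1 (by rwa [Set.union_singleton, Set.insert_eq_of_mem h] at hcons)
      · intro h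
        by_contra hF
        exact h (by rw [Set.union_singleton]; exact w.2.2.1 F hF)
    have memΔ : ∀ (w : {p : Set (Formula A C ar) × Set (Formula A C ar) // MaxPair Cons p})
        (F : Formula A C ar), F ∈ w.1.2 ↔ ¬ Cons w.1.1 ({F} ∪ w.1.2) := by
      intro w F
      constructor
      · intro h hcons
        exact w.2.1 (by rwa [Set.singleton_union, Set.insert_eq_of_mem h] at hcons)
      · intro h
        by_contra hF
        exact h (by rw [Set.singleton_union]; exact w.2.2.2 F hF)
    have key : ∀ (w : {p : Set (Formula A C ar) × Set (Formula A C ar) // MaxPair Cons p})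
        (c : C) (Fs : Fin (ar c) → Formula A C ar)
        (B : Set (Fin (ar c)) × Set (Fin (ar c))),
        (¬ Cons (w.1.1 ∪ Fs '' B.1) (Fs '' B.2 ∪ w.1.2)) ↔
          ((∀ i ∈ B.1, Fs i ∈ w.1.1) ∧ (∀ i ∈ B.2, Fs i ∈ w.1.2)) := by
      intro w c Fs B
      constructor
      · intro h
        constructor
        · intro i hi
          by_contra hF
          exact h (mono (Set.insert_subset (Set.mem_union_right _ ⟨i, hi, rfl⟩)
            Set.subset_union_left) Set.subset_union_right (w.2.2.1 _ hF))
        · intro i hi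
          by_contra hF
          exact h (mono Set.subset_union_left
            (Set.insert_subset (Set.mem_union_left _ ⟨i, hi, rfl⟩)
              Set.subset_union_right) (w.2.2.2 _ hF))
      · rintro ⟨h1, h2⟩ hcons
        have e1 : w.1.1 ∪ Fs '' B.1 = w.1.1 :=
          Set.union_eq_self_of_subset_right (by rintro _ ⟨i, hi, rfl⟩; exact h1 i hi)
        have e2 : Fs '' B.2 ∪ w.1.2 = w.1.2 :=
          Set.union_eq_self_of_subset_left (by rintro _ ⟨i, hi, rfl⟩; exact h2 i hi)
        rw [e1, e2] at hcons
        exact w.2.1 hcons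
    intro c Fs w
    refine code4_congr ?_ ?_
    · rw [memΓ w, (hB c w.1.1 w.1.2 Fs).1]
      push_neg
      simp only [key w c Fs, code4_p, code4_d]
    · rw [memΔ w ((Formula.conn c Fs)),
        show ({Formula.conn c Fs} ∪ w.1.2 : Set (Formula A C ar)) =
          {Formula.conn c Fs} ∪ w.1.2 from rfl]
      rw [show (¬ Cons w.1.1 ({Formula.conn c Fs} ∪ w.1.2)) ↔
        ¬ ∀ B ∈ Bc c, Cons (w.1.1 ∪ Fs '' B.1) (Fs '' B.2 ∪ w.1.2) from
          not_congr (hB c w.1.1 w.1.2 Fs).2]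
      push_neg
      simp only [key w c Fs, code4_p, code4_d]
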